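/- arXiv:2402.11785 — 2 statements merged into one kernel-verified Lean document; each statement's English description precedes it below -/
import Mathlib

section
/- Let V : Fin m → Fin n → EuclideanSpace ℂ (Fin 2) be an n-qubit UPB of size m. Suppose there are rows p ≠ q, columns i ≠ j, and vectors a, c with V p i = a, V q j = a, V p j = c, V q i = c, such that: (1) a and c are linearly independent and ⟪a, c⟫ ≠ 0; (2) multiplicity one: for every row r ≠ p, V r i is not a scalar multiple of a and V r j is not a scalar multiple of c, and for every row r ≠ q, V r i is not a scalar multiple of c and V r j is not a scalar multiple of a; (3) for every row r, ⟪V r i, a⟫ = 0 iff ⟪V r j, a⟫ = 0, and ⟪V r i, c⟫ = 0 iff ⟪V r j, c⟫ = 0. Then the family W obtained from V by swapping the entries of rows p and q in columns i and j (W p i = c, W p j = a, W q i = a, W q j = c, and W r k = V r k in all other positions) is again an n-qubit UPB of size m. -/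
open scoped InnerProductSpace

/-- A pairwise orthogonal product family of size `m` on `n` qubits. -/
def PairwiseOrthProdFamily {m n : ℕ}
    (V : Fin m → Fin n → EuclideanSpace ℂ (Fin 2)) : Prop :=
  (∀ p i, V p i ≠ 0) ∧ ∀ p q : Fin m, p ≠ q → ∃ i, ⟪V p i, V q i⟫_ℂ = 0

/-- Extendibility: a nonzero product vector orthogonal to every row exists. -/
def Extendible {m n : ℕ}
    (V : Fin m → Fin n → EuclideanSpace ℂ (Fin 2)) : Prop :=
  ∃ w : Fin n → EuclideanSpace ℂ (Fin 2),
    (∀ i, w i ≠ 0) ∧ ∀ p, ∃ i, ⟪w i, V p i⟫_ℂ = 0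

/-- An `n`-qubit unextendible product basis of size `m`. -/
def IsUPB {m n : ℕ}
    (V : Fin m → Fin n → EuclideanSpace ℂ (Fin 2)) : Prop :=
  PairwiseOrthProdFamily V ∧ m < 2 ^ n ∧ ¬ Extendible V

lemma coord_ne (x : EuclideanSpace ℂ (Fin 2)) (hx : x ≠ 0) : x 0 ≠ 0 ∨ x 1 ≠ 0 := by
  by_contra h
  push_neg at h
  exact hx (PiLp.ext fun k => by fin_cases k <;> simp [h.1, h.2])

lemma inner_two (x y : EuclideanSpace ℂ (Fin 2)) :
    ⟪x, y⟫_ℂ = starRingEnd ℂ (x 0) * y 0 + starRingEnd ℂ (x 1) * y 1 := by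
  simp [PiLp.inner_apply, Fin.sum_univ_two, RCLike.inner_apply]
  ring

lemma inner_zero_symm {u v : EuclideanSpace ℂ (Fin 2)} (h : ⟪u, v⟫_ℂ = 0) :
    ⟪v, u⟫_ℂ = 0 := by
  rw [← inner_conj_symm, h, map_zero]

lemma exists_orth (a : EuclideanSpace ℂ (Fin 2)) (ha : a ≠ 0) :
    ∃ x : EuclideanSpace ℂ (Fin 2), x ≠ 0 ∧ ⟪x, a⟫_ℂ = 0 := by
  refine ⟨WithLp.toLp 2 (fun k => if k = 0 then -(starRingEnd ℂ (a 1)) else starRingEnd ℂ (a 0) : Fin 2 → ℂ), ?_, ?_⟩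
  · intro h
    apply ha
    have h0 := congrArg (fun v : EuclideanSpace ℂ (Fin 2) => v 0) h
    have h1 := congrArg (fun v : EuclideanSpace ℂ (Fin 2) => v 1) h
    simp at h0 h1
    refine PiLp.ext fun k => ?_
    fin_cases k <;> simp [h0, h1]
  · simp only [inner_two]
    simp
    ring

set_option linter.unreachableTactic false in
set_option linter.unusedTactic false in
set_option linter.unnecessarySeqFocus false in
lemma qubit_collinear (x u v : EuclideanSpace ℂ (Fin 2)) (hx : x ≠ 0) (hu : u ≠ 0)
    (hxu : ⟪x, u⟫_ℂ = 0) (hxv : ⟪x, v⟫_ℂ = 0) : ∃ s : ℂ, v = s • u := by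
  rw [inner_two] at hxu hxv
  set t0 := starRingEnd ℂ (x 0) with ht0
  set t1 := starRingEnd ℂ (x 1) with ht1
  have htx : t0 ≠ 0 ∨ t1 ≠ 0 := by
    rcases coord_ne x hx with h | h
    · exact Or.inl (by simpa [ht0] using h)
    · exact Or.inr (by simpa [ht1] using h)
  have hcross : u 0 * v 1 - u 1 * v 0 = 0 := by
    rcases htx with h | h
    · have h2 : t0 * (u 0 * v 1 - u 1 * v 0) = 0 := by
        linear_combination v 1 * hxu - u 1 * hxv
      exact (mul_eq_zero.mp h2).resolve_left h
    · have h2 : t1 * (u 0 * v 1 - u 1 * v 0) = 0 := by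
        linear_combination u 0 * hxv - v 0 * hxu
      exact (mul_eq_zero.mp h2).resolve_left h
  rcases coord_ne u hu with h | h
  · refine ⟨v 0 / u 0, PiLp.ext fun k => ?_⟩
    fin_cases k <;> simp [PiLp.smul_apply, smul_eq_mul] <;> field_simp <;>
      first | linear_combination hcross | linear_combination -hcross | linear_combination 2*hcross | linear_combination -2*hcross
  · refine ⟨v 1 / u 1, PiLp.ext fun k => ?_⟩
    fin_cases k <;> simp [PiLp.smul_apply, smul_eq_mul] <;> field_simp <;>
      first | linear_combination hcross | linear_combination -hcross | linear_combination 2*hcross | linear_combination -2*hcross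


/-- Modification helper: if `w` extends `W`, row `t` of `V` has entry `b` at `col`,
`w col ⊥ d`, row `u` has an outside witness, and no other row's `col` entry is a
multiple of `d`, then replacing `w col` by a vector orthogonal to `b` extends `V`. -/
lemma extend_mod {m n : ℕ} (V W : Fin m → Fin n → EuclideanSpace ℂ (Fin 2))
    (t u : Fin m) (col : Fin n) (b d : EuclideanSpace ℂ (Fin 2))
    (hb : b ≠ 0) (hd : d ≠ 0)
    (w : Fin n → EuclideanSpace ℂ (Fin 2)) (hwnz : ∀ k, w k ≠ 0)
    (hwort : ∀ r, ∃ k, ⟪w k, W r k⟫_ℂ = 0)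
    (hWr : ∀ r k, r ≠ t → r ≠ u → W r k = V r k)
    (hVt : V t col = b)
    (hwd : ⟪w col, d⟫_ℂ = 0)
    (hout : ∃ k, k ≠ col ∧ ⟪w k, V u k⟫_ℂ = 0)
    (hmult : ∀ r, r ≠ t → r ≠ u → ¬ ∃ s : ℂ, V r col = s • d) :
    Extendible V := by
  obtain ⟨x, hxnz, hxb⟩ := exists_orth b hb
  refine ⟨Function.update w col x, ?_, ?_⟩
  · intro k
    by_cases h : k = col
    · subst h; rw [Function.update_self]; exact hxnz
    · rw [Function.update_of_ne h]; exact hwnz k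
  · intro r
    by_cases hrt : r = t
    · subst hrt; exact ⟨col, by rw [Function.update_self, hVt]; exact hxb⟩
    by_cases hru : r = u
    · subst hru
      obtain ⟨k, hk1, hk2⟩ := hout
      exact ⟨k, by rw [Function.update_of_ne hk1]; exact hk2⟩
    obtain ⟨k, hk⟩ := hwort r
    rw [hWr r k hrt hru] at hk
    by_cases hkc : k = col
    · subst hkc
      exact absurd (qubit_collinear (w k) d (V r k) (hwnz k) hd hwd hk)
        (hmult r hrt hru)
    · exact ⟨k, by rw [Function.update_of_ne hkc]; exact hk⟩

/-- swapping the `2×2` submatrix `(a c; c a)` of a UPB under the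
stated multiplicity and orthogonality-pattern hypotheses yields again a UPB. -/
theorem swap_submatrix_isUPB {m n : ℕ}
    (V W : Fin m → Fin n → EuclideanSpace ℂ (Fin 2))
    (hV : IsUPB V)
    (p q : Fin m) (hpq : p ≠ q) (i j : Fin n) (hij : i ≠ j)
    (a c : EuclideanSpace ℂ (Fin 2))
    (hpi : V p i = a) (hqj : V q j = a) (hpj : V p j = c) (hqi : V q i = c)
    (hlin : LinearIndependent ℂ ![a, c]) (hac : ⟪a, c⟫_ℂ ≠ 0)
    (hmult₁ : ∀ r, r ≠ p →
      (¬ ∃ s : ℂ, V r i = s • a) ∧ (¬ ∃ s : ℂ, V r j = s • c))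
    (hmult₂ : ∀ r, r ≠ q →
      (¬ ∃ s : ℂ, V r i = s • c) ∧ (¬ ∃ s : ℂ, V r j = s • a))
    (hcol : ∀ r, (⟪V r i, a⟫_ℂ = 0 ↔ ⟪V r j, a⟫_ℂ = 0) ∧
                 (⟪V r i, c⟫_ℂ = 0 ↔ ⟪V r j, c⟫_ℂ = 0))
    (hWpi : W p i = c) (hWpj : W p j = a) (hWqi : W q i = a) (hWqj : W q j = c)
    (hWrest : ∀ r k, ¬ ((r = p ∨ r = q) ∧ (k = i ∨ k = j)) → W r k = V r k) :
    IsUPB W := by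
  obtain ⟨⟨hVnz, hVorth⟩, hm, hVext⟩ := hV
  have hanz : a ≠ 0 := hpi ▸ hVnz p i
  have hcnz : c ≠ 0 := hqi ▸ hVnz q i
  have hca : ⟪c, a⟫_ℂ ≠ 0 := fun h => hac (inner_zero_symm h)
  -- W agrees with V off the special rows
  have hWr : ∀ r k, r ≠ p → r ≠ q → W r k = V r k := by
    intro r k h1 h2
    exact hWrest r k (by tauto)
  -- W agrees with V off the special columns
  have hWk : ∀ r k, k ≠ i → k ≠ j → W r k = V r k := by
    intro r k h1 h2
    exact hWrest r k (by tauto)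
  refine ⟨⟨?_, ?_⟩, hm, ?_⟩
  · -- nonzero entries
    intro r k
    by_cases hr : (r = p ∨ r = q) ∧ (k = i ∨ k = j)
    · obtain ⟨h1, h2⟩ := hr
      rcases h1 with rfl | rfl <;> rcases h2 with rfl | rfl <;>
        simp only [hWpi, hWpj, hWqi, hWqj] <;> assumption
    · rw [hWrest r k hr]; exact hVnz r k
  · -- pairwise orthogonality
    intro r s hrs
    by_cases hrp : r = p
    · subst hrp
      by_cases hsq : s = q
      · subst hsq
        obtain ⟨k, hk⟩ := hVorth r s hrs
        have hki : k ≠ i := fun h => by rw [h, hpi, hqi] at hk; exact hac hk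
        have hkj : k ≠ j := fun h => by rw [h, hpj, hqj] at hk; exact hca hk
        exact ⟨k, by rw [hWk r k hki hkj, hWk s k hki hkj]; exact hk⟩
      · -- s ∉ {p,q}
        have hsp : s ≠ r := fun h => hrs h.symm
        obtain ⟨k, hk⟩ := hVorth r s hrs
        have hWs : ∀ k', W s k' = V s k' := fun k' => hWr s k' hsp hsq
        by_cases hki : k = i
        · subst hki
          rw [hpi] at hk
          have h1 : ⟪V s j, a⟫_ℂ = 0 := (hcol s).1.mp (inner_zero_symm hk)
          exact ⟨j, by rw [hWpj, hWs j]; exact inner_zero_symm h1⟩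
        · by_cases hkj : k = j
          · subst hkj
            rw [hpj] at hk
            have h1 : ⟪V s i, c⟫_ℂ = 0 := (hcol s).2.mpr (inner_zero_symm hk)
            exact ⟨i, by rw [hWpi, hWs i]; exact inner_zero_symm h1⟩
          · exact ⟨k, by rw [hWk r k hki hkj, hWs k]; exact hk⟩
    by_cases hrq : r = q
    · subst hrq
      by_cases hsp : s = p
      · subst hsp
        obtain ⟨k, hk⟩ := hVorth r s hrs
        have hki : k ≠ i := fun h => by rw [h, hqi, hpi] at hk; exact hca hk
        have hkj : k ≠ j := fun h => by rw [h, hqj, hpj] at hk; exact hac hk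
        exact ⟨k, by rw [hWk r k hki hkj, hWk s k hki hkj]; exact hk⟩
      · have hsq : s ≠ r := fun h => hrs h.symm
        obtain ⟨k, hk⟩ := hVorth r s hrs
        have hWs : ∀ k', W s k' = V s k' := fun k' => hWr s k' hsp hsq
        by_cases hki : k = i
        · subst hki
          rw [hqi] at hk
          have h1 : ⟪V s j, c⟫_ℂ = 0 := (hcol s).2.mp (inner_zero_symm hk)
          exact ⟨j, by rw [hWqj, hWs j]; exact inner_zero_symm h1⟩
        · by_cases hkj : k = j
          · subst hkj
            rw [hqj] at hk
            have h1 : ⟪V s i, a⟫_ℂ = 0 := (hcol s).1.mpr (inner_zero_symm hk)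
            exact ⟨i, by rw [hWqi, hWs i]; exact inner_zero_symm h1⟩
          · exact ⟨k, by rw [hWk r k hki hkj, hWs k]; exact hk⟩
    -- now r ∉ {p, q}
    have hWrr : ∀ k', W r k' = V r k' := fun k' => hWr r k' hrp hrq
    by_cases hsp : s = p
    · subst hsp
      obtain ⟨k, hk⟩ := hVorth r s hrs
      by_cases hki : k = i
      · subst hki
        rw [hpi] at hk
        have h1 : ⟪V r j, a⟫_ℂ = 0 := (hcol r).1.mp hk
        exact ⟨j, by rw [hWpj, hWrr j]; exact h1⟩
      · by_cases hkj : k = j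
        · subst hkj
          rw [hpj] at hk
          have h1 : ⟪V r i, c⟫_ℂ = 0 := (hcol r).2.mpr hk
          exact ⟨i, by rw [hWpi, hWrr i]; exact h1⟩
        · exact ⟨k, by rw [hWrr k, hWk s k hki hkj]; exact hk⟩
    by_cases hsq : s = q
    · subst hsq
      obtain ⟨k, hk⟩ := hVorth r s hrs
      by_cases hki : k = i
      · subst hki
        rw [hqi] at hk
        have h1 : ⟪V r j, c⟫_ℂ = 0 := (hcol r).2.mp hk
        exact ⟨j, by rw [hWqj, hWrr j]; exact h1⟩
      · by_cases hkj : k = j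
        · subst hkj
          rw [hqj] at hk
          have h1 : ⟪V r i, a⟫_ℂ = 0 := (hcol r).1.mpr hk
          exact ⟨i, by rw [hWqi, hWrr i]; exact h1⟩
        · exact ⟨k, by rw [hWrr k, hWk s k hki hkj]; exact hk⟩
    · obtain ⟨k, hk⟩ := hVorth r s hrs
      exact ⟨k, by rw [hWrr k, hWr s k hsp hsq]; exact hk⟩
  · -- unextendibility
    rintro ⟨w, hwnz, hwort⟩
    apply hVext
    -- classify witnesses for rows p and q of W
    have Hp : ⟪w i, c⟫_ℂ = 0 ∨ ⟪w j, a⟫_ℂ = 0 ∨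
        ∃ k, k ≠ i ∧ k ≠ j ∧ ⟪w k, V p k⟫_ℂ = 0 := by
      obtain ⟨k, hk⟩ := hwort p
      by_cases h1 : k = i
      · subst h1; rw [hWpi] at hk; exact Or.inl hk
      by_cases h2 : k = j
      · subst h2; rw [hWpj] at hk; exact Or.inr (Or.inl hk)
      · exact Or.inr (Or.inr ⟨k, h1, h2, by rwa [hWk p k h1 h2] at hk⟩)
    have Hq : ⟪w i, a⟫_ℂ = 0 ∨ ⟪w j, c⟫_ℂ = 0 ∨
        ∃ k, k ≠ i ∧ k ≠ j ∧ ⟪w k, V q k⟫_ℂ = 0 := by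
      obtain ⟨k, hk⟩ := hwort q
      by_cases h1 : k = i
      · subst h1; rw [hWqi] at hk; exact Or.inl hk
      by_cases h2 : k = j
      · subst h2; rw [hWqj] at hk; exact Or.inr (Or.inl hk)
      · exact Or.inr (Or.inr ⟨k, h1, h2, by rwa [hWk q k h1 h2] at hk⟩)
    -- extension of V for rows other than p, q (no modification case)
    have hother : ∀ r, r ≠ p → r ≠ q → ∃ k, ⟪w k, V r k⟫_ℂ = 0 := by
      intro r h1 h2
      obtain ⟨k, hk⟩ := hwort r
      exact ⟨k, by rwa [hWr r k h1 h2] at hk⟩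
    have hWr' : ∀ r k, r ≠ q → r ≠ p → W r k = V r k := fun r k h1 h2 => hWr r k h2 h1
    rcases Hp with hp1 | hp1 | ⟨k0, hk0i, hk0j, hk0⟩ <;>
      rcases Hq with hq1 | hq1 | ⟨k1, hk1i, hk1j, hk1⟩
    -- in-p, in-q cases: w itself works
    · refine ⟨w, hwnz, fun r => ?_⟩
      by_cases h1 : r = p
      · exact ⟨i, by rw [h1, hpi]; exact hq1⟩
      by_cases h2 : r = q
      · exact ⟨i, by rw [h2, hqi]; exact hp1⟩
      · exact hother r h1 h2
    · refine ⟨w, hwnz, fun r => ?_⟩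
      by_cases h1 : r = p
      · exact ⟨j, by rw [h1, hpj]; exact hq1⟩
      by_cases h2 : r = q
      · exact ⟨i, by rw [h2, hqi]; exact hp1⟩
      · exact hother r h1 h2
    -- in-p (col i, ⊥ c), out-q
    · exact extend_mod V W p q i a c hanz hcnz w hwnz hwort hWr hpi hp1
        ⟨k1, hk1i, hk1⟩ (fun r h1 h2 => (hmult₂ r h2).1)
    · refine ⟨w, hwnz, fun r => ?_⟩
      by_cases h1 : r = p
      · exact ⟨i, by rw [h1, hpi]; exact hq1⟩
      by_cases h2 : r = q
      · exact ⟨j, by rw [h2, hqj]; exact hp1⟩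
      · exact hother r h1 h2
    · refine ⟨w, hwnz, fun r => ?_⟩
      by_cases h1 : r = p
      · exact ⟨j, by rw [h1, hpj]; exact hq1⟩
      by_cases h2 : r = q
      · exact ⟨j, by rw [h2, hqj]; exact hp1⟩
      · exact hother r h1 h2
    -- in-p (col j, ⊥ a), out-q
    · exact extend_mod V W p q j c a hcnz hanz w hwnz hwort hWr hpj hp1
        ⟨k1, hk1j, hk1⟩ (fun r h1 h2 => (hmult₂ r h2).2)
    -- out-p, in-q (col i, ⊥ a)
    · exact extend_mod V W q p i c a hcnz hanz w hwnz hwort hWr' hqi hq1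
        ⟨k0, hk0i, hk0⟩ (fun r h1 h2 => (hmult₁ r h2).1)
    -- out-p, in-q (col j, ⊥ c)
    · exact extend_mod V W q p j a c hanz hcnz w hwnz hwort hWr' hqj hq1
        ⟨k0, hk0j, hk0⟩ (fun r h1 h2 => (hmult₁ r h2).2)
    -- out-p, out-q
    · refine ⟨w, hwnz, fun r => ?_⟩
      by_cases h1 : r = p
      · exact ⟨k0, by rw [h1]; exact hk0⟩
      by_cases h2 : r = q
      · exact ⟨k1, by rw [h2]; exact hk1⟩
      · exact hother r h1 h2
end

section
/- There exists a 3-qubit unextendible product basis of size 4 (the Shifts UPB): a family V : Fin 4 → Fin 3 → EuclideanSpace ℂ (Fin 2) of nonzero entries such that any two rows are orthogonal as product vectors and no nonzero product vector is orthogonal to all four rows. -/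
open scoped InnerProductSpace

noncomputable def qe0 : EuclideanSpace ℂ (Fin 2) := !₂[1, 0]
noncomputable def qe1 : EuclideanSpace ℂ (Fin 2) := !₂[0, 1]
noncomputable def qep : EuclideanSpace ℂ (Fin 2) := !₂[1, 1]
noncomputable def qem : EuclideanSpace ℂ (Fin 2) := !₂[1, -1]

/-- The "Shifts" UPB rows: |0,1,+⟩, |1,+,0⟩, |+,0,1⟩, |-,-,-⟩. -/
noncomputable def shifts : Fin 4 → Fin 3 → EuclideanSpace ℂ (Fin 2) :=
  ![![qe0, qe1, qep], ![qe1, qep, qe0], ![qep, qe0, qe1], ![qem, qem, qem]]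

lemma inner2 (w a : EuclideanSpace ℂ (Fin 2)) :
    ⟪w, a⟫_ℂ = (starRingEnd ℂ) (w 0) * a 0 + (starRingEnd ℂ) (w 1) * a 1 := by
  simp [PiLp.inner_apply, Fin.sum_univ_two, mul_comm]

/-- A vector orthogonal to two linearly independent vectors of `ℂ²` is zero. -/
lemma ortho_two {w a b : EuclideanSpace ℂ (Fin 2)}
    (hd : a 0 * b 1 - a 1 * b 0 ≠ 0)
    (h1 : ⟪w, a⟫_ℂ = 0) (h2 : ⟪w, b⟫_ℂ = 0) : w = 0 := by
  rw [inner2] at h1 h2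
  have k0 : (starRingEnd ℂ) (w 0) * (a 0 * b 1 - a 1 * b 0) = 0 := by
    linear_combination b 1 * h1 - a 1 * h2
  have k1 : (starRingEnd ℂ) (w 1) * (a 0 * b 1 - a 1 * b 0) = 0 := by
    linear_combination a 0 * h2 - b 0 * h1
  have w0 : w 0 = 0 := by
    have := (mul_eq_zero.mp k0).resolve_right hd
    simpa using congrArg (starRingEnd ℂ) this
  have w1 : w 1 = 0 := by
    have := (mul_eq_zero.mp k1).resolve_right hd
    simpa using congrArg (starRingEnd ℂ) this
  ext j
  fin_cases j <;> simpa [w0, w1]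

lemma shifts_ne : ∀ (p : Fin 4) (i : Fin 3), shifts p i ≠ 0 := by
  have h0 : qe0 ≠ 0 := fun h => by simpa [qe0] using congrArg (fun v => v 0) h
  have h1 : qe1 ≠ 0 := fun h => by simpa [qe1] using congrArg (fun v => v 1) h
  have hp : qep ≠ 0 := fun h => by simpa [qep] using congrArg (fun v => v 0) h
  have hm : qem ≠ 0 := fun h => by simpa [qem] using congrArg (fun v => v 0) h
  intro p i
  fin_cases p <;> fin_cases i <;> simp [shifts] <;>
    first | exact h0 | exact h1 | exact hp | exact hm

lemma shifts_orth : ∀ p q : Fin 4, p ≠ q → ∃ i, ⟪shifts p i, shifts q i⟫_ℂ = 0 := by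
  intro p q hpq
  fin_cases p <;> fin_cases q <;>
    first
      | exact absurd rfl hpq
      | (refine ⟨0, ?_⟩; simp [shifts, qe0, qe1, qep, qem, inner2]; done)
      | (refine ⟨1, ?_⟩; simp [shifts, qe0, qe1, qep, qem, inner2]; done)
      | (refine ⟨2, ?_⟩; simp [shifts, qe0, qe1, qep, qem, inner2]; done)

lemma shifts_det : ∀ p q : Fin 4, p ≠ q → ∀ i : Fin 3,
    shifts p i 0 * shifts q i 1 - shifts p i 1 * shifts q i 0 ≠ 0 := by
  intro p q hpq i
  fin_cases i <;> fin_cases p <;> fin_cases q <;>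
    first
      | exact absurd rfl hpq
      | norm_num [shifts, qe0, qe1, qep, qem]

/-- there exists a 3-qubit UPB of size 4. -/
theorem exists_upb_4_3 :
    ∃ V : Fin 4 → Fin 3 → EuclideanSpace ℂ (Fin 2), IsUPB V := by
  refine ⟨shifts, ⟨shifts_ne, shifts_orth⟩, by norm_num, ?_⟩
  rintro ⟨w, hw, hperp⟩
  choose f hf using hperp
  obtain ⟨p, q, hpq, hfe⟩ := Fintype.exists_ne_map_eq_of_card_lt f (by norm_num)
  have h1 := hf p
  have h2 := hf q
  rw [hfe] at h1
  exact hw (f q) (ortho_two (shifts_det p q hpq (f q)) h1 h2)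
end
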